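/- arXiv:2208.01091 — 2 statements merged into one kernel-verified Lean document; each statement's English description precedes it below -/
import Mathlib

section
/- Comparison of the two equivariant deformations of Grothendieck polynomials: for every integer ℓ ≥ 1 one has G†_ℓ(z,ζ) − G'_ℓ(z,ζ) = (-1)^{ℓ+1} Σ_{m=1}^{k} (-1)^{m-1} e_{ℓ+m}(ζ) (i.e., (-1)^{ℓ+1}(e_{ℓ+1}(ζ) − e_{ℓ+2}(ζ) + ⋯ + (-1)^{k-1} e_{ℓ+k}(ζ))) in ℤ[z_1,…,z_k, ζ_1,…,ζ_n]. -/
open Finset MvPolynomial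

noncomputable section

/-- The elementary symmetric polynomial `e_r` of a family of ring elements. -/
def esymmF {R : Type*} [CommRing R] {m : ℕ} (f : Fin m → R) (r : ℕ) : R :=
  ∑ t ∈ Finset.powersetCard r Finset.univ, ∏ j ∈ t, f j

/-- The complete homogeneous symmetric polynomial `h_r` of a family. -/
def hsymmF {R : Type*} [CommRing R] {m : ℕ} (f : Fin m → R) (r : ℕ) : R :=
  ∑ μ : Sym (Fin m) r, (μ.1.map f).prod

/-- `e_r(z)`: elementary symmetric polynomial in the variables `z_1,…,z_k`
inside `ℤ[z_1,…,z_k, ζ_1,…,ζ_n]`. -/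
def eZ (k n : ℕ) (r : ℕ) : MvPolynomial (Fin k ⊕ Fin n) ℤ :=
  esymmF (fun i : Fin k => X (Sum.inl i)) r

/-- `e_r(ζ)`: elementary symmetric polynomial in the variables `ζ_1,…,ζ_n`. -/
def eZeta (k n : ℕ) (r : ℕ) : MvPolynomial (Fin k ⊕ Fin n) ℤ :=
  esymmF (fun j : Fin n => X (Sum.inr j)) r

/-- `h_r(z)`: complete homogeneous symmetric polynomial in `z_1,…,z_k`. -/
def hZ (k n : ℕ) (r : ℕ) : MvPolynomial (Fin k ⊕ Fin n) ℤ :=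
  hsymmF (fun i : Fin k => X (Sum.inl i)) r

/-- The single-row Grothendieck polynomial
`G_j(z) = Σ_{a,b ≥ 0, a+b ≤ k} (-1)^b h_{j+a}(z) e_b(z)`. -/
def GZ (k n : ℕ) (j : ℕ) : MvPolynomial (Fin k ⊕ Fin n) ℤ :=
  ∑ a ∈ Finset.range (k + 1), ∑ b ∈ Finset.range (k + 1 - a),
    (-1) ^ b * hZ k n (j + a) * eZ k n b

/-- The equivariant complete homogeneous polynomial
`h'_j(z,ζ) = Σ_{a+b=j} (-1)^a e_a(ζ) h_b(z)`. -/
def hPrime (k n : ℕ) (j : ℕ) : MvPolynomial (Fin k ⊕ Fin n) ℤ :=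
  ∑ p ∈ Finset.HasAntidiagonal.antidiagonal j, (-1) ^ p.1 * eZeta k n p.1 * hZ k n p.2

/-- The equivariant Grothendieck polynomial
`G'_j(z,ζ) = Σ_{a+b=j} (-1)^a e_a(ζ) G_b(z)`. -/
def GPrime (k n : ℕ) (j : ℕ) : MvPolynomial (Fin k ⊕ Fin n) ℤ :=
  ∑ p ∈ Finset.HasAntidiagonal.antidiagonal j, (-1) ^ p.1 * eZeta k n p.1 * GZ k n p.2

/-- The truncation `c^z_{≥j} = Σ_{i=j}^{k} (-1)^{i-j} e_i(z)`. -/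
def cGeZ (k n : ℕ) (j : ℕ) : MvPolynomial (Fin k ⊕ Fin n) ℤ :=
  ∑ i ∈ Finset.Icc j k, (-1) ^ (i - j) * eZ k n i

/-- `c'_{≥ℓ}(z,ζ) = e_ℓ(ζ) + Σ_{m=1}^{k-1} e_{ℓ-m}(ζ) c^z_{≥ m+1}`,
with the convention `e_s(ζ) = 0` for `s < 0` (i.e. for `m > ℓ`). -/
def cPrimeGe (k n : ℕ) (ℓ : ℕ) : MvPolynomial (Fin k ⊕ Fin n) ℤ :=
  eZeta k n ℓ + ∑ m ∈ Finset.Icc 1 (k - 1),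
    (if m ≤ ℓ then eZeta k n (ℓ - m) * cGeZ k n (m + 1) else 0)

/-- `G†_j(z,ζ) = Σ_{a,b ≥ 0, a+b ≤ k} (-1)^b h'_{j+a}(z,ζ) e_b(z)`. -/
def GDagger (k n : ℕ) (j : ℕ) : MvPolynomial (Fin k ⊕ Fin n) ℤ :=
  ∑ a ∈ Finset.range (k + 1), ∑ b ∈ Finset.range (k + 1 - a),
    (-1) ^ b * hPrime k n (j + a) * eZ k n b


section EHtheory


variable {R : Type*} [CommRing R]

/-- generalized elementary symmetric -/
def Eg {α : Type*} [Fintype α] (f : α → R) (r : ℕ) : R :=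
  ∑ t ∈ Finset.powersetCard r Finset.univ, ∏ j ∈ t, f j

/-- generalized complete homogeneous -/
def Hg {α : Type*} [Fintype α] (f : α → R) (r : ℕ) : R :=
  haveI := Classical.decEq α
  ∑ μ : Sym α r, (μ.1.map f).prod

lemma sum_univ_isEmpty {β : Type*} {M : Type*} [AddCommMonoid M] (i1 : Fintype β)
    (he : IsEmpty β) (g : β → M) : (∑ x ∈ @Finset.univ β i1, g x) = 0 := by
  rw [@Finset.univ_eq_empty β i1 he, Finset.sum_empty]

lemma sum_univ_inst {β : Type*} {M : Type*} [AddCommMonoid M] (i1 i2 : Fintype β) (g : β → M) :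
    (∑ x ∈ @Finset.univ β i1, g x) = ∑ x ∈ @Finset.univ β i2, g x := by
  rw [Subsingleton.elim i1 i2]

@[simp] lemma Eg_zero {α : Type*} [Fintype α] (f : α → R) : Eg f 0 = 1 := by
  simp [Eg]

@[simp] lemma Hg_zero {α : Type*} [Fintype α] (f : α → R) : Hg f 0 = 1 := by
  simp [Hg, Sym.eq_nil_of_card_zero]

lemma Eg_empty {α : Type*} [Fintype α] [IsEmpty α] (f : α → R) (r : ℕ) :
    Eg f (r + 1) = 0 := by
  rw [Eg, Finset.powersetCard_eq_empty.mpr (by simp), Finset.sum_empty]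

lemma Hg_empty {α : Type*} [Fintype α] [IsEmpty α] (f : α → R) (r : ℕ) :
    Hg f (r + 1) = 0 := by
  have he : IsEmpty (Sym α (r + 1)) := by
    constructor
    intro μ
    have h1 : μ.1 ≠ 0 := by
      intro h
      have h2 := μ.2
      rw [h] at h2
      simp at h2
    obtain ⟨x, -⟩ := Multiset.exists_mem_of_ne_zero h1
    exact isEmptyElim x
  unfold Hg
  exact sum_univ_isEmpty _ he _


lemma sum_univ_equiv {β γ : Type*} {M : Type*} [AddCommMonoid M] (i1 : Fintype β)
    (i2 : Fintype γ) (e : β ≃ γ) (g : γ → M) :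
    (∑ x ∈ @Finset.univ β i1, g (e x)) = ∑ y ∈ @Finset.univ γ i2, g y :=
  @Fintype.sum_equiv β γ M i1 i2 _ e _ g (fun _ => rfl)

lemma sum_univ_equiv' {β γ : Type*} {M : Type*} [AddCommMonoid M] (i1 : Fintype β)
    (i2 : Fintype γ) (e : β ≃ γ) (f : β → M) (g : γ → M) (h : ∀ x, f x = g (e x)) :
    (∑ x ∈ @Finset.univ β i1, f x) = ∑ y ∈ @Finset.univ γ i2, g y :=
  @Fintype.sum_equiv β γ M i1 i2 _ e f g h

lemma Eg_equiv {α β : Type*} [Fintype α] [Fintype β] (e : α ≃ β) (f : β → R) (r : ℕ) :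
    Eg (f ∘ e) r = Eg f r := by
  unfold Eg
  rw [← Finset.map_univ_equiv e, Finset.powersetCard_map, Finset.sum_map]
  refine Finset.sum_congr rfl fun t _ => ?_
  rw [show (Finset.mapEmbedding e.toEmbedding).toEmbedding t = t.map e.toEmbedding from
    Finset.mapEmbedding_apply, Finset.prod_map]
  rfl

lemma Hg_equiv {α β : Type*} [Fintype α] [Fintype β] (e : α ≃ β) (f : β → R) (r : ℕ) :
    Hg (f ∘ e) r = Hg f r := by
  unfold Hg
  refine sum_univ_equiv' _ _ (Sym.equivCongr e) _ _ fun μ => ?_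
  show (Multiset.map (f ∘ e) μ.1).prod = (Multiset.map f ((Sym.equivCongr e) μ).1).prod
  have h1 : ((Sym.equivCongr e) μ).1 = Multiset.map e μ.1 := rfl
  rw [h1, Multiset.map_map]


lemma Eg_option {α : Type*} [Fintype α] (f : Option α → R) (r : ℕ) :
    Eg f (r + 1) = Eg (f ∘ some) (r + 1) + f none * Eg (f ∘ some) r := by
  classical
  have huniv : (Finset.univ : Finset (Option α))
      = insert none (Finset.univ.map Function.Embedding.some) := by
    ext x; cases x <;> simp
  have hnone : (none : Option α) ∉ Finset.univ.map Function.Embedding.some := by simp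
  have hpows : ∀ s : ℕ, ∀ t ∈ Finset.powersetCard s
      (Finset.univ.map (Function.Embedding.some (α := α))), (none : Option α) ∉ t := by
    intro s t ht hmem
    have := (Finset.mem_powersetCard.mp ht).1 hmem
    simp at this
  have hdisj : Disjoint
      (Finset.powersetCard (r+1) (Finset.univ.map (Function.Embedding.some (α:=α))))
      ((Finset.powersetCard r (Finset.univ.map Function.Embedding.some)).image (insert none)) := by
    rw [Finset.disjoint_left]
    intro t ht hti
    obtain ⟨u, hu, rfl⟩ := Finset.mem_image.mp hti
    exact hpows _ _ ht (Finset.mem_insert_self _ _)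
  have hkey : ∀ s : ℕ,
      (∑ t ∈ Finset.powersetCard s (Finset.univ.map (Function.Embedding.some (α:=α))),
        ∏ j ∈ t, f j)
      = ∑ t ∈ Finset.powersetCard s Finset.univ, ∏ j ∈ t, (f ∘ some) j := by
    intro s
    rw [Finset.powersetCard_map, Finset.sum_map]
    refine Finset.sum_congr rfl fun t _ => ?_
    rw [show (Finset.mapEmbedding (Function.Embedding.some (α:=α))).toEmbedding t
        = t.map Function.Embedding.some from Finset.mapEmbedding_apply, Finset.prod_map]
    rfl
  have hinj : ∀ u ∈ Finset.powersetCard r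
      (Finset.univ.map (Function.Embedding.some (α:=α))), ∀ v ∈ Finset.powersetCard r
      (Finset.univ.map Function.Embedding.some), insert none u = insert none v → u = v := by
    intro u hu v hv h
    have h2 := congrArg (fun w => Finset.erase w none) h
    simpa [Finset.erase_insert (hpows r u hu), Finset.erase_insert (hpows r v hv)] using h2
  unfold Eg
  rw [huniv, Finset.powersetCard_succ_insert hnone, Finset.sum_union hdisj, hkey (r+1)]
  congr 1
  rw [Finset.sum_image hinj,
    Finset.sum_congr rfl (fun t ht => Finset.prod_insert (hpows r t ht)),
    ← Finset.mul_sum, hkey r, Finset.mul_sum]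

lemma Hg_option {α : Type*} [Fintype α] (f : Option α → R) (r : ℕ) :
    Hg f (r + 1) = Hg (f ∘ some) (r + 1) + f none * Hg f r := by
  classical
  unfold Hg
  refine (sum_univ_equiv' _ inferInstance symOptionSuccEquiv _
    (fun x => (((symOptionSuccEquiv.symm x : Sym (Option α) (r+1))).1.map f).prod)
    (fun μ => by
      show (Multiset.map f μ.1).prod
        = (Multiset.map f (symOptionSuccEquiv.symm (symOptionSuccEquiv μ) : Sym (Option α) (r+1)).1).prod
      rw [Equiv.symm_apply_apply])).trans ?_
  rw [Fintype.sum_sum_type, add_comm]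
  congr 1
  · refine (sum_univ_inst _ _ _).trans (Finset.sum_congr rfl fun s _ => ?_)
    have h1 : (symOptionSuccEquiv.symm (Sum.inr s) : Sym (Option α) (r+1)).1
        = Multiset.map some s.1 := rfl
    rw [h1, Multiset.map_map]
  · rw [Finset.mul_sum]
    refine (sum_univ_inst _ _ _).trans (Finset.sum_congr rfl fun s _ => ?_)
    have h1 : (symOptionSuccEquiv.symm (Sum.inl s) : Sym (Option α) (r+1)).1
        = none ::ₘ s.1 := rfl
    rw [h1, Multiset.map_cons, Multiset.prod_cons]


theorem T_zero (α : Type) (inst : Fintype α) (f : α → R) (s : ℕ) (hs : 1 ≤ s) :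
    (∑ p ∈ Finset.HasAntidiagonal.antidiagonal s,
      (-1 : R) ^ p.2 * @Hg R _ α inst f p.1 * @Eg R _ α inst f p.2) = 0 := by
  have hfin : Finite α := Finite.of_fintype α
  revert inst f s
  refine Finite.induction_empty_option
    (P := fun α : Type => ∀ (inst : Fintype α) (f : α → R) (s : ℕ), 1 ≤ s →
      (∑ p ∈ Finset.HasAntidiagonal.antidiagonal s,
        (-1 : R) ^ p.2 * @Hg R _ α inst f p.1 * @Eg R _ α inst f p.2) = 0)
    ?_ ?_ ?_ α
  · -- equiv step
    intro α β e hα instβ f s hs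
    haveI instα : Fintype α := Fintype.ofEquiv β e.symm
    have step : ∀ p : ℕ × ℕ, (-1 : R) ^ p.2 * Hg f p.1 * Eg f p.2
        = (-1 : R) ^ p.2 * Hg (f ∘ e) p.1 * Eg (f ∘ e) p.2 := by
      intro p
      rw [Hg_equiv e f p.1, Eg_equiv e f p.2]
    rw [Finset.sum_congr rfl fun p _ => step p]
    exact hα instα (f ∘ e) s hs
  · -- empty step
    intro inst f s hs
    refine Finset.sum_eq_zero fun p hp => ?_
    have hsum := Finset.HasAntidiagonal.mem_antidiagonal.mp hp
    rcases p with ⟨a, b⟩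
    dsimp only at hsum ⊢
    cases a with
    | zero =>
      obtain ⟨t, rfl⟩ : ∃ t, b = t + 1 := ⟨b - 1, by omega⟩
      rw [Eg_empty, mul_zero]
    | succ a' =>
      rw [Hg_empty, mul_zero, zero_mul]
  · -- option step
    intro α hFin hα instO f s hs
    rw [Subsingleton.elim instO (@instFintypeOption α hFin)]
    clear instO
    set g : α → R := f ∘ some with hg
    set z : R := f none with hz
    have claim1 : ∀ t : ℕ,
        (∑ p ∈ Finset.HasAntidiagonal.antidiagonal (t + 1), (-1 : R) ^ p.2 * Hg f p.1 * Eg f p.2)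
        = (∑ p ∈ Finset.HasAntidiagonal.antidiagonal (t + 1), (-1 : R) ^ p.2 * Hg f p.1 * Eg g p.2)
          - z * ∑ p ∈ Finset.HasAntidiagonal.antidiagonal t, (-1 : R) ^ p.2 * Hg f p.1 * Eg g p.2 := by
      intro t
      rw [Finset.Nat.sum_antidiagonal_succ'
            (f := fun p => (-1 : R) ^ p.2 * Hg f p.1 * Eg f p.2),
          Finset.Nat.sum_antidiagonal_succ'
            (f := fun p => (-1 : R) ^ p.2 * Hg f p.1 * Eg g p.2)]
      have hsplit : ∀ p : ℕ × ℕ, (-1 : R) ^ (p.2 + 1) * Hg f p.1 * Eg f (p.2 + 1)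
          = (-1 : R) ^ (p.2 + 1) * Hg f p.1 * Eg g (p.2 + 1)
            - z * ((-1 : R) ^ p.2 * Hg f p.1 * Eg g p.2) := by
        intro p
        rw [Eg_option f p.2, pow_succ]
        ring
      rw [Finset.sum_congr rfl fun p _ => hsplit p, Finset.sum_sub_distrib, Finset.mul_sum]
      simp only [Eg_zero]
      ring
    have claim2 : ∀ t : ℕ,
        (∑ p ∈ Finset.HasAntidiagonal.antidiagonal (t + 1), (-1 : R) ^ p.2 * Hg f p.1 * Eg g p.2)
        = (∑ p ∈ Finset.HasAntidiagonal.antidiagonal (t + 1), (-1 : R) ^ p.2 * Hg g p.1 * Eg g p.2)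
          + z * ∑ p ∈ Finset.HasAntidiagonal.antidiagonal t, (-1 : R) ^ p.2 * Hg f p.1 * Eg g p.2 := by
      intro t
      rw [Finset.Nat.sum_antidiagonal_succ
            (f := fun p => (-1 : R) ^ p.2 * Hg f p.1 * Eg g p.2),
          Finset.Nat.sum_antidiagonal_succ
            (f := fun p => (-1 : R) ^ p.2 * Hg g p.1 * Eg g p.2)]
      have hsplit : ∀ p : ℕ × ℕ, (-1 : R) ^ p.2 * Hg f (p.1 + 1) * Eg g p.2
          = (-1 : R) ^ p.2 * Hg g (p.1 + 1) * Eg g p.2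
            + z * ((-1 : R) ^ p.2 * Hg f p.1 * Eg g p.2) := by
        intro p
        rw [Hg_option f p.1]
        ring
      rw [Finset.sum_congr rfl fun p _ => hsplit p, Finset.sum_add_distrib, Finset.mul_sum]
      simp only [Hg_zero]
      ring
    obtain ⟨t, rfl⟩ : ∃ t, s = t + 1 := ⟨s - 1, by omega⟩
    rw [claim1 t, claim2 t, hα hFin g (t + 1) hs]
    ring


-- Bridges to the concrete polynomial ring
lemma eZ_eq_Eg (k n r : ℕ) :
    eZ k n r = Eg (fun i : Fin k => (X (Sum.inl i) : MvPolynomial (Fin k ⊕ Fin n) ℤ)) r := rfl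

lemma hZ_eq_Hg (k n r : ℕ) :
    hZ k n r = Hg (fun i : Fin k => (X (Sum.inl i) : MvPolynomial (Fin k ⊕ Fin n) ℤ)) r := by
  unfold hZ hsymmF Hg
  exact sum_univ_inst _ _ _

lemma hZ_zero (k n : ℕ) : hZ k n 0 = 1 := by rw [hZ_eq_Hg, Hg_zero]

lemma eZ_zero (k n : ℕ) : eZ k n 0 = 1 := by rw [eZ_eq_Eg, Eg_zero]

lemma T0 (k n : ℕ) (s : ℕ) (hs : 1 ≤ s) :
    (∑ p ∈ Finset.HasAntidiagonal.antidiagonal s, (-1 : MvPolynomial (Fin k ⊕ Fin n) ℤ) ^ p.2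
      * hZ k n p.1 * eZ k n p.2) = 0 := by
  have h := T_zero (R := MvPolynomial (Fin k ⊕ Fin n) ℤ) (Fin k) inferInstance
    (fun i : Fin k => X (Sum.inl i)) s hs
  rw [← h]
  refine Finset.sum_congr rfl fun p _ => ?_
  rw [hZ_eq_Hg, eZ_eq_Eg]

lemma S_one (k n N : ℕ) :
    (∑ a ∈ Finset.range (N + 1), ∑ b ∈ Finset.range (N + 1 - a),
      (-1 : MvPolynomial (Fin k ⊕ Fin n) ℤ) ^ b * hZ k n a * eZ k n b) = 1 := by
  induction N with
  | zero => simp [hZ_zero, eZ_zero]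
  | succ N ih =>
    have hT := T0 k n (N + 1) (by omega)
    rw [Finset.Nat.sum_antidiagonal_eq_sum_range_succ_mk] at hT
    rw [Finset.sum_range_succ]
    have hstep : ∀ a ∈ Finset.range (N + 1),
        (∑ b ∈ Finset.range (N + 1 + 1 - a),
          (-1 : MvPolynomial (Fin k ⊕ Fin n) ℤ) ^ b * hZ k n a * eZ k n b)
        = (∑ b ∈ Finset.range (N + 1 - a),
            (-1 : MvPolynomial (Fin k ⊕ Fin n) ℤ) ^ b * hZ k n a * eZ k n b)
          + (-1 : MvPolynomial (Fin k ⊕ Fin n) ℤ) ^ (N + 1 - a) * hZ k n a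
            * eZ k n (N + 1 - a) := by
      intro a ha
      have ha' : a ≤ N := by simpa [Nat.lt_succ_iff] using ha
      rw [show N + 1 + 1 - a = (N + 1 - a) + 1 by omega, Finset.sum_range_succ]
    rw [Finset.sum_congr rfl hstep, Finset.sum_add_distrib, ih]
    rw [show N + 1 + 1 - (N + 1) = 1 by omega, Finset.sum_range_one]
    have : (∑ a ∈ Finset.range (N + 1),
        (-1 : MvPolynomial (Fin k ⊕ Fin n) ℤ) ^ (N + 1 - a) * hZ k n a * eZ k n (N + 1 - a))
        + (-1 : MvPolynomial (Fin k ⊕ Fin n) ℤ) ^ 0 * hZ k n (N + 1) * eZ k n 0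
        = ∑ a ∈ Finset.range (N + 1 + 1),
            (-1 : MvPolynomial (Fin k ⊕ Fin n) ℤ) ^ (N + 1 - a) * hZ k n a
              * eZ k n (N + 1 - a) := by
      conv_rhs => rw [Finset.sum_range_succ]
      rw [Nat.sub_self]
    have h2 : (∑ a ∈ Finset.range (N + 1 + 1),
        (-1 : MvPolynomial (Fin k ⊕ Fin n) ℤ) ^ (N + 1 - a) * hZ k n a * eZ k n (N + 1 - a))
        = 0 := by
      rw [← hT]
    have h3 := this.trans h2
    linear_combination h3

end EHtheory

/-- Comparison of the two equivariant deformations of Grothendieck polynomials: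
for `ℓ ≥ 1`,
`G†_ℓ(z,ζ) − G'_ℓ(z,ζ) = (-1)^{ℓ+1} (e_{ℓ+1}(ζ) − e_{ℓ+2}(ζ) + ⋯ + (-1)^{k-1} e_{ℓ+k}(ζ))`. -/
theorem GDagger_sub_GPrime (k n : ℕ) (hk : 1 ≤ k) (hn : 1 ≤ n) (ℓ : ℕ) (hℓ : 1 ≤ ℓ) :
    GDagger k n ℓ - GPrime k n ℓ
      = (-1) ^ (ℓ + 1) * ∑ m ∈ Finset.Icc 1 k, (-1) ^ (m - 1) * eZeta k n (ℓ + m) := by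
  classical
  have hPrime_expand : ∀ j : ℕ, hPrime k n j
      = ∑ c ∈ Finset.range (j + 1), (-1) ^ c * eZeta k n c * hZ k n (j - c) := by
    intro j
    rw [hPrime, Finset.Nat.sum_antidiagonal_eq_sum_range_succ_mk]
  have GPrime_expand : GPrime k n ℓ
      = ∑ c ∈ Finset.range (ℓ + 1), (-1) ^ c * eZeta k n c * GZ k n (ℓ - c) := by
    rw [GPrime, Finset.Nat.sum_antidiagonal_eq_sum_range_succ_mk]
  have stepA : GDagger k n ℓ
      = (∑ a ∈ Finset.range (k+1), ∑ b ∈ Finset.range (k+1-a), ∑ c ∈ Finset.range (ℓ+1),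
          (-1)^b * ((-1)^c * eZeta k n c * hZ k n (ℓ + a - c)) * eZ k n b)
        + ∑ a ∈ Finset.range (k+1), ∑ b ∈ Finset.range (k+1-a), ∑ m ∈ Finset.range a,
            (-1)^b * ((-1)^(ℓ+1+m) * eZeta k n (ℓ+1+m) * hZ k n (a - 1 - m)) * eZ k n b := by
    rw [GDagger, ← Finset.sum_add_distrib]
    refine Finset.sum_congr rfl fun a _ => ?_
    rw [← Finset.sum_add_distrib]
    refine Finset.sum_congr rfl fun b _ => ?_
    rw [hPrime_expand (ℓ + a),
      show ℓ + a + 1 = (ℓ + 1) + a by omega,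
      Finset.sum_range_add (fun c => (-1)^c * eZeta k n c * hZ k n (ℓ + a - c)) (ℓ+1) a,
      mul_add, add_mul]
    congr 1
    · rw [Finset.mul_sum, Finset.sum_mul]
    · rw [Finset.mul_sum, Finset.sum_mul]
      refine Finset.sum_congr rfl fun m hm => ?_
      have hm' : m < a := Finset.mem_range.mp hm
      rw [show ℓ + a - (ℓ + 1 + m) = a - 1 - m by omega]
  have stepB : (∑ a ∈ Finset.range (k+1), ∑ b ∈ Finset.range (k+1-a),
        ∑ c ∈ Finset.range (ℓ+1),
          (-1)^b * ((-1)^c * eZeta k n c * hZ k n (ℓ + a - c)) * eZ k n b)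
      = GPrime k n ℓ := by
    rw [GPrime_expand]
    rw [Finset.sum_congr rfl fun (a : ℕ) (_ : a ∈ Finset.range (k+1)) =>
      (Finset.sum_comm (s := Finset.range (k+1-a)) (t := Finset.range (ℓ+1))
        (f := fun b c => (-1)^b * ((-1)^c * eZeta k n c * hZ k n (ℓ + a - c)) * eZ k n b))]
    rw [Finset.sum_comm]
    refine Finset.sum_congr rfl fun c hc => ?_
    have hc' : c ≤ ℓ := by
      have := Finset.mem_range.mp hc; omega
    rw [GZ, Finset.mul_sum]
    refine Finset.sum_congr rfl fun a _ => ?_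
    rw [Finset.mul_sum]
    refine Finset.sum_congr rfl fun b _ => ?_
    rw [show ℓ + a - c = ℓ - c + a by omega]
    ring
  rw [stepA, ← stepB, add_sub_cancel_left]
  have hRHS : ((-1 : MvPolynomial (Fin k ⊕ Fin n) ℤ))^(ℓ+1)
        * ∑ m ∈ Finset.Icc 1 k, (-1)^(m-1) * eZeta k n (ℓ+m)
      = ∑ m ∈ Finset.Icc 1 k, (-1)^(ℓ+m) * eZeta k n (ℓ+m) := by
    rw [Finset.mul_sum]
    refine Finset.sum_congr rfl fun m hm => ?_
    have h1 : 1 ≤ m := (Finset.mem_Icc.mp hm).1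
    rw [← mul_assoc, ← pow_add, show ℓ+1+(m-1) = ℓ+m by omega]
  rw [hRHS]
  have hS : ∀ m ∈ Finset.Icc 1 k, ((-1 : MvPolynomial (Fin k ⊕ Fin n) ℤ))^(ℓ+m)
        * eZeta k n (ℓ+m)
      = ∑ a' ∈ Finset.range (k-m+1), ∑ b ∈ Finset.range (k-m+1-a'),
          (-1)^b * ((-1)^(ℓ+m) * eZeta k n (ℓ+m) * hZ k n a') * eZ k n b := by
    intro m hm
    calc ((-1 : MvPolynomial (Fin k ⊕ Fin n) ℤ))^(ℓ+m) * eZeta k n (ℓ+m)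
        = ((-1)^(ℓ+m) * eZeta k n (ℓ+m)) * ∑ a' ∈ Finset.range (k-m+1),
            ∑ b ∈ Finset.range (k-m+1-a'), (-1)^b * hZ k n a' * eZ k n b := by
          rw [S_one k n (k-m), mul_one]
      _ = _ := by
          rw [Finset.mul_sum]
          refine Finset.sum_congr rfl fun a' _ => ?_
          rw [Finset.mul_sum]
          refine Finset.sum_congr rfl fun b _ => ?_
          ring
  rw [Finset.sum_congr rfl hS]
  -- swap the inner two sums on the left
  rw [Finset.sum_congr rfl fun (a : ℕ) (_ : a ∈ Finset.range (k+1)) =>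
    (Finset.sum_comm (s := Finset.range (k+1-a)) (t := Finset.range a)
      (f := fun b m => (-1)^b * ((-1)^(ℓ+1+m) * eZeta k n (ℓ+1+m) * hZ k n (a - 1 - m))
        * eZ k n b))]
  rw [Finset.sum_sigma' (Finset.range (k+1)) (fun a => Finset.range a)
    (fun a m => ∑ b ∈ Finset.range (k+1-a),
      (-1)^b * ((-1)^(ℓ+1+m) * eZeta k n (ℓ+1+m) * hZ k n (a - 1 - m)) * eZ k n b),
    Finset.sum_sigma' (Finset.Icc 1 k) (fun m => Finset.range (k-m+1))
    (fun m a' => ∑ b ∈ Finset.range (k-m+1-a'),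
      (-1)^b * ((-1)^(ℓ+m) * eZeta k n (ℓ+m) * hZ k n a') * eZ k n b)]
  refine Finset.sum_nbij' (fun x => ⟨x.2 + 1, x.1 - x.2 - 1⟩) (fun y => ⟨y.1 + y.2, y.1 - 1⟩)
    ?_ ?_ ?_ ?_ ?_
  · rintro ⟨a, m⟩ hx
    simp only [Finset.mem_sigma, Finset.mem_range, Finset.mem_Icc] at hx ⊢
    omega
  · rintro ⟨m, a'⟩ hy
    simp only [Finset.mem_sigma, Finset.mem_range, Finset.mem_Icc] at hy ⊢
    omega
  · rintro ⟨a, m⟩ hx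
    simp only [Finset.mem_sigma, Finset.mem_range] at hx
    simp only [Sigma.mk.inj_iff, heq_eq_eq]
    omega
  · rintro ⟨m, a'⟩ hy
    simp only [Finset.mem_sigma, Finset.mem_range, Finset.mem_Icc] at hy
    simp only [Sigma.mk.inj_iff, heq_eq_eq]
    omega
  · rintro ⟨a, m⟩ hx
    simp only [Finset.mem_sigma, Finset.mem_range] at hx
    obtain ⟨ha, hm⟩ := hx
    dsimp only
    rw [show k - (m+1) + 1 - (a - m - 1) = k + 1 - a by omega,
      show ℓ + (m + 1) = ℓ + 1 + m by omega,
      show a - m - 1 = a - 1 - m by omega]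

end
end

section
/- Matrix identity for the antidiagonal transpose A' of A: for every 1 ≤ i ≤ k one has Σ_{j=1}^{k} A'_{ij} · (binom(k, j) − e_j(z)) = (Π_{i=1}^{k} (1 − z_i)) · binom(k−1, k−i) in ℤ[z_1,…,z_k], where A'_{ij} := A_{k+1-j, k+1-i}. -/
open Finset MvPolynomial

noncomputable section

/-- `e_r(z)` in `ℤ[z_1,…,z_k]`. -/
def eP (k : ℕ) (r : ℕ) : MvPolynomial (Fin k) ℤ :=
  esymmF (fun i => X i) r

/-- `h_r(z)` in `ℤ[z_1,…,z_k]`. -/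
def hP (k : ℕ) (r : ℕ) : MvPolynomial (Fin k) ℤ :=
  hsymmF (fun i => X i) r

/-- The single-row Grothendieck polynomial
`G_j(z) = Σ_{a,b ≥ 0, a+b ≤ k} (-1)^b h_{j+a}(z) e_b(z)`. -/
def GP (k : ℕ) (j : ℕ) : MvPolynomial (Fin k) ℤ :=
  ∑ a ∈ Finset.range (k + 1), ∑ b ∈ Finset.range (k + 1 - a),
    (-1) ^ b * hP k (j + a) * eP k b

/-- The truncation `c^z_{≥j} = Σ_{i=j}^{k} (-1)^{i-j} e_i(z)`. -/
def cGe (k : ℕ) (j : ℕ) : MvPolynomial (Fin k) ℤ :=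
  ∑ i ∈ Finset.Icc j k, (-1) ^ (i - j) * eP k i

/-- The truncation `c^z_{≤m} = Σ_{i=0}^{m} (-1)^i e_i(z)`. -/
def cLe (k : ℕ) (m : ℕ) : MvPolynomial (Fin k) ℤ :=
  ∑ i ∈ Finset.range (m + 1), (-1) ^ i * eP k i

/-- The `k × k` matrix `A` (with `1`-based indices `i, j`):
`A_{ij} = (-1)^{k-i} c^z_{≥ k-j+1}` for `j < i` and `A_{ij} = (-1)^{j-i} c^z_{≤ k-j}` for `j ≥ i`. -/
def AMat (k : ℕ) (i j : ℕ) : MvPolynomial (Fin k) ℤ :=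
  if j < i then (-1) ^ (k - i) * cGe k (k - j + 1) else (-1) ^ (j - i) * cLe k (k - j)

lemma alt_sum_choose {R : Type*} [CommRing R] (n m : ℕ) :
    ∑ j ∈ Finset.range (m + 1), (-1 : R) ^ j * (Nat.choose (n + 1) j : R)
      = (-1) ^ m * (Nat.choose n m : R) := by
  induction m with
  | zero => simp
  | succ m ih =>
    rw [Finset.sum_range_succ, ih, Nat.choose_succ_succ']
    push_cast
    ring

lemma eP_zero (k : ℕ) : eP k 0 = 1 := by
  simp [eP, esymmF]

lemma sum_alt_eP (k : ℕ) :
    ∑ r ∈ Finset.range (k + 1), (-1 : MvPolynomial (Fin k) ℤ) ^ r * eP k r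
      = ∏ a : Fin k, (1 - X a) := by
  classical
  symm
  have h1 : ∀ a : Fin k, (1 : MvPolynomial (Fin k) ℤ) - X a = (fun b => -X b) a + 1 := by
    intro a; ring
  calc ∏ a : Fin k, (1 - X a : MvPolynomial (Fin k) ℤ)
      = ∏ a : Fin k, ((fun b => -X b) a + (1 : MvPolynomial (Fin k) ℤ)) := by
        exact Finset.prod_congr rfl fun a _ => h1 a
    _ = ∑ t ∈ (Finset.univ : Finset (Fin k)).powerset, (∏ a ∈ t, -X a) * ∏ a ∈ Finset.univ \ t, (1 : MvPolynomial (Fin k) ℤ) := by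
        exact Finset.prod_add _ _ _
    _ = ∑ t ∈ (Finset.univ : Finset (Fin k)).powerset, ∏ a ∈ t, (-X a : MvPolynomial (Fin k) ℤ) := by
        simp
    _ = ∑ r ∈ Finset.range (k + 1), ∑ t ∈ Finset.powersetCard r (Finset.univ : Finset (Fin k)), ∏ a ∈ t, (-X a : MvPolynomial (Fin k) ℤ) := by
        rw [Finset.sum_powerset]
        simp
    _ = ∑ r ∈ Finset.range (k + 1), (-1 : MvPolynomial (Fin k) ℤ) ^ r * eP k r := by
        refine Finset.sum_congr rfl fun r _ => ?_
        rw [eP, esymmF, Finset.mul_sum]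
        refine Finset.sum_congr rfl fun t ht => ?_
        have : ∀ a ∈ t, (-X a : MvPolynomial (Fin k) ℤ) = (-1) * X a := fun a _ => by ring
        rw [Finset.prod_congr rfl this, Finset.prod_mul_distrib, Finset.prod_const,
          (Finset.mem_powersetCard.1 ht).2]

/-- Matrix identity for the antidiagonal transpose `A'` of `A` (`A'_{ij} = A_{k+1-j, k+1-i}`):
for `1 ≤ i ≤ k`,
`Σ_{j=1}^{k} A'_{ij} (binom(k,j) − e_j(z)) = (Π_{i=1}^{k} (1 − z_i)) · binom(k−1, k−i)`. -/
theorem Aprime_mul_binom_sub_e (k : ℕ) (hk : 1 ≤ k)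
    (i : ℕ) (hi1 : 1 ≤ i) (hik : i ≤ k) :
    ∑ j ∈ Finset.Icc 1 k, AMat k (k + 1 - j) (k + 1 - i)
        * ((Nat.choose k j : MvPolynomial (Fin k) ℤ) - eP k j)
      = (∏ a : Fin k, (1 - X a)) * (Nat.choose (k - 1) (k - i) : MvPolynomial (Fin k) ℤ) := by
  classical
  set d : ℕ → MvPolynomial (Fin k) ℤ :=
    fun j => (-1) ^ j * ((Nat.choose k j : MvPolynomial (Fin k) ℤ) - eP k j) with hd
  set E : MvPolynomial (Fin k) ℤ := ∏ a : Fin k, (1 - X a) with hEdef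
  set cL : MvPolynomial (Fin k) ℤ := cLe k (i - 1) with hcLdef
  set cG : MvPolynomial (Fin k) ℤ := cGe k i with hcGdef
  set S : MvPolynomial (Fin k) ℤ := ∑ j ∈ Finset.range i, d j with hSdef
  set ε : MvPolynomial (Fin k) ℤ := (-1) ^ i with hεdef
  set δ : MvPolynomial (Fin k) ℤ := (-1) ^ (i - 1) with hδdef
  have hε : ε * ε = 1 := by
    rw [hεdef, ← pow_add, show i + i = 2 * i from by omega, pow_mul]
    norm_num
  have hδ : δ * ε = -1 := by
    rw [hδdef, hεdef, ← pow_add, show i - 1 + i = 2 * (i - 1) + 1 from by omega,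
      pow_succ, pow_mul]
    norm_num
  -- term rewrite
  have hterm : ∀ j ∈ Finset.Icc 1 k,
      AMat k (k + 1 - j) (k + 1 - i) * ((Nat.choose k j : MvPolynomial (Fin k) ℤ) - eP k j)
        = if j < i then -(cG * d j) else ε * (cL * d j) := by
    intro j hj
    rw [Finset.mem_Icc] at hj
    by_cases hji : j < i
    · rw [if_pos hji, AMat, if_pos (by omega : k + 1 - i < k + 1 - j),
        show k - (k + 1 - j) = j - 1 from by omega,
        show k - (k + 1 - i) + 1 = i from by omega]
      have e3 : (-1 : MvPolynomial (Fin k) ℤ) ^ (j - 1) = -(-1) ^ j := by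
        rw [show j = j - 1 + 1 from by omega, pow_succ]
        rw [show j - 1 + 1 - 1 = j - 1 from by omega]
        ring
      rw [e3, hd]
      ring
    · rw [if_neg hji, AMat, if_neg (by omega : ¬ (k + 1 - i < k + 1 - j)),
        show k + 1 - i - (k + 1 - j) = j - i from by omega,
        show k - (k + 1 - i) = i - 1 from by omega]
      have e4 : (-1 : MvPolynomial (Fin k) ℤ) ^ (j - i) = ε * (-1) ^ j := by
        rw [hεdef, ← pow_add, show i + j = 2 * i + (j - i) from by omega, pow_add, pow_mul]
        norm_num
      rw [e4, hd, hcLdef]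
      ring
  rw [Finset.sum_congr rfl hterm]
  -- split the sum
  rw [show Finset.Icc 1 k = Finset.Ico 1 (k + 1) from by rw [Finset.Ico_add_one_right_eq_Icc],
    ← Finset.sum_Ico_consecutive _ (by omega : 1 ≤ i) (by omega : i ≤ k + 1)]
  have h1 : ∑ j ∈ Finset.Ico 1 i, (if j < i then -(cG * d j) else ε * (cL * d j))
      = -(cG * ∑ j ∈ Finset.Ico 1 i, d j) := by
    rw [Finset.mul_sum, ← Finset.sum_neg_distrib]
    refine Finset.sum_congr rfl fun j hj => ?_
    rw [Finset.mem_Ico] at hj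
    rw [if_pos hj.2]
  have h2 : ∑ j ∈ Finset.Ico i (k + 1), (if j < i then -(cG * d j) else ε * (cL * d j))
      = ε * (cL * ∑ j ∈ Finset.Ico i (k + 1), d j) := by
    rw [Finset.mul_sum, Finset.mul_sum]
    refine Finset.sum_congr rfl fun j hj => ?_
    rw [Finset.mem_Ico] at hj
    rw [if_neg (by omega : ¬ j < i)]
  rw [h1, h2]
  -- identify the partial sums
  have hd0 : d 0 = 0 := by rw [hd]; simp [eP_zero]
  have hS1 : ∑ j ∈ Finset.Ico 1 i, d j = S := by
    have h := Finset.sum_eq_sum_Ico_succ_bot (by omega : 0 < i) d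
    rw [hSdef, Finset.range_eq_Ico, h, hd0, zero_add]
  have hc0 : ∑ j ∈ Finset.range (k + 1),
      (-1 : MvPolynomial (Fin k) ℤ) ^ j * (Nat.choose k j : MvPolynomial (Fin k) ℤ) = 0 := by
    have h := alt_sum_choose (R := MvPolynomial (Fin k) ℤ) (k - 1) k
    rw [show k - 1 + 1 = k from by omega] at h
    rw [h, Nat.choose_eq_zero_of_lt (by omega : k - 1 < k), Nat.cast_zero, mul_zero]
  have hSf : ∑ j ∈ Finset.range (k + 1), d j = -E := by
    have hsplit : ∀ j ∈ Finset.range (k + 1), d j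
        = (-1) ^ j * (Nat.choose k j : MvPolynomial (Fin k) ℤ) - (-1) ^ j * eP k j := by
      intro j _; rw [hd]; ring
    rw [Finset.sum_congr rfl hsplit, Finset.sum_sub_distrib, hc0, sum_alt_eP, hEdef, zero_sub]
  have hS2 : ∑ j ∈ Finset.Ico i (k + 1), d j = -E - S := by
    have h := Finset.sum_Ico_consecutive d (by omega : 0 ≤ i) (by omega : i ≤ k + 1)
    rw [← Finset.range_eq_Ico, ← Finset.range_eq_Ico] at h
    rw [hSf, ← hSdef] at h
    linear_combination h
  rw [hS1, hS2]
  -- the two key algebraic identities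
  have hScL : S + cL = δ * (Nat.choose (k - 1) (i - 1) : MvPolynomial (Fin k) ℤ) := by
    rw [hSdef, hcLdef, cLe, show i - 1 + 1 = i from by omega, ← Finset.sum_add_distrib]
    have hstep : ∀ j ∈ Finset.range i, d j + (-1) ^ j * eP k j
        = (-1) ^ j * (Nat.choose k j : MvPolynomial (Fin k) ℤ) := by
      intro j _; rw [hd]; ring
    rw [Finset.sum_congr rfl hstep]
    have h := alt_sum_choose (R := MvPolynomial (Fin k) ℤ) (k - 1) (i - 1)
    rw [show k - 1 + 1 = k from by omega, show i - 1 + 1 = i from by omega] at h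
    rw [h, hδdef]
  have hcl' : cL = ∑ r ∈ Finset.Ico 0 i, (-1) ^ r * eP k r := by
    rw [hcLdef, cLe, show i - 1 + 1 = i from by omega, Finset.range_eq_Ico]
  have hEsum : (∑ r ∈ Finset.Ico 0 i, (-1 : MvPolynomial (Fin k) ℤ) ^ r * eP k r)
      + (∑ r ∈ Finset.Ico i (k + 1), (-1) ^ r * eP k r) = E := by
    rw [Finset.sum_Ico_consecutive _ (by omega : 0 ≤ i) (by omega : i ≤ k + 1),
      ← Finset.range_eq_Ico, sum_alt_eP, hEdef]
  have hG1 : ε * cG = ∑ r ∈ Finset.Ico i (k + 1), (-1 : MvPolynomial (Fin k) ℤ) ^ r * eP k r := by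
    rw [hεdef, hcGdef, cGe, Finset.mul_sum,
      show Finset.Icc i k = Finset.Ico i (k + 1) from by rw [Finset.Ico_add_one_right_eq_Icc]]
    refine Finset.sum_congr rfl fun r hr => ?_
    rw [Finset.mem_Ico] at hr
    rw [← mul_assoc, ← pow_add, show i + (r - i) = r from by omega]
  have hG : ε * cG = E - cL := by
    rw [hG1, hcl']
    linear_combination hEsum
  have hCk : Nat.choose (k - 1) (k - i) = Nat.choose (k - 1) (i - 1) := by
    rw [show k - i = k - 1 - (i - 1) from by omega, Nat.choose_symm (by omega : i - 1 ≤ k - 1)]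
  rw [hCk]
  linear_combination (-(ε * S)) * hG + (S * cG) * hε + (-(ε * E)) * hScL
    + (-(E * (Nat.choose (k - 1) (i - 1) : MvPolynomial (Fin k) ℤ))) * hδ

end
end
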